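/- For every ω > ω_crit = (26 + 15√3)/2, there exists a unique z₂ > √(3/2) with σ(z₂) = ω and ω > (5 + √27)·z₂³ (equivalently k(z₂) > 0), where σ(z) = 4z⁵/(2z² − 3). -/

import Mathlib

private lemma sig_aux_pow5 (x : ℝ) (h1 : 1 < x) (h2 : 3/2 ≤ x^2) : 9/4 ≤ x^5 := by
  have h3 : 9/4 ≤ (x^2)^2 := by nlinarith
  nlinarith [mul_le_mul h3 (le_of_lt h1) zero_le_one (by positivity : (0:ℝ) ≤ (x^2)^2)]

private lemma sig_aux_bound (s3 y : ℝ) (hs3 : s3^2 = 3) (hs3l : (1.7:ℝ) < s3)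
    (h : (5 + 3*s3) * (2*y^2-3) < 4 * y^2) : y^2 < (2+s3)/2 := by
  nlinarith

private lemma sig_aux_cond (s3 z : ℝ) (hs3 : s3^2 = 3) (hs3l : (1.7:ℝ) < s3)
    (hz0 : 0 < z) (hz2 : z^2 < (2+s3)/2) :
    (5 + 3*s3) * z^3 * (2*z^2 - 3) < 4 * z^5 := by
  have h1 : (5 + 3*s3) * (2*z^2-3) < 4 * z^2 := by nlinarith
  nlinarith [mul_lt_mul_of_pos_right h1 (pow_pos hz0 3)]

private lemma sig_aux_inj (z y : ℝ) (hz1 : 1 < z) (hy1 : 1 < y)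
    (hz2 : z^2 < 2) (hy2 : y^2 < 2) :
    2*z^2*y^2*(z^2+z*y+y^2) < 3*(z^4+z^3*y+z^2*y^2+z*y^3+y^4) := by
  have hz0 : 0 < z := by linarith
  have hy0 : 0 < y := by linarith
  have hzy : z*y < 2 := by nlinarith [sq_nonneg (z-y)]
  nlinarith [mul_pos hz0 hy0, sq_nonneg (z-y), mul_pos (mul_pos hz0 hy0) (mul_pos hz0 hy0),
    mul_lt_mul_of_pos_right hz2 (mul_pos (mul_pos hz0 hy0) hy0),
    mul_lt_mul_of_pos_right hy2 (mul_pos (mul_pos hz0 hy0) hz0),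
    mul_lt_mul_of_pos_right hzy (mul_pos (mul_pos hz0 hy0) (mul_pos hz0 hy0))]

/-- For every ω > ω_crit there exists a unique z₂ > √(3/2) with σ(z₂) = ω
and ω > (5+√27)z₂³, where σ(z) = 4z⁵/(2z²−3). -/
theorem sigma_unique_root (ω : ℝ) (hω : (26 + 15 * Real.sqrt 3) / 2 < ω) :
    ∃! z₂ : ℝ, Real.sqrt (3 / 2) < z₂ ∧
      4 * z₂ ^ 5 / (2 * z₂ ^ 2 - 3) = ω ∧
      (5 + Real.sqrt 27) * z₂ ^ 3 < ω := by
  have hs3 : Real.sqrt 3 ^ 2 = 3 := Real.sq_sqrt (by norm_num)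
  set s3 := Real.sqrt 3 with hs3def
  have hs3l : (1.7:ℝ) < s3 := by
    rw [hs3def]
    rw [show (1.7:ℝ) = Real.sqrt (1.7^2) from (Real.sqrt_sq (by norm_num)).symm]
    exact Real.sqrt_lt_sqrt (by norm_num) (by norm_num)
  have hs3u : s3 < 1.8 := by
    rw [hs3def]
    rw [show (1.8:ℝ) = Real.sqrt (1.8^2) from (Real.sqrt_sq (by norm_num)).symm]
    exact Real.sqrt_lt_sqrt (by norm_num) (by norm_num)
  have h27 : Real.sqrt 27 = 3 * s3 := by
    rw [show (27:ℝ) = 3^2 * 3 by norm_num, Real.sqrt_mul (by positivity), Real.sqrt_sq (by norm_num)]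
  clear_value s3
  have hωpos : 0 < ω := by linarith
  -- key: any candidate satisfies 1 < y, 3/2 < y², y² < (2+s3)/2
  have key : ∀ y : ℝ, Real.sqrt (3/2) < y → 4 * y ^ 5 / (2 * y ^ 2 - 3) = ω →
      (5 + Real.sqrt 27) * y ^ 3 < ω → 1 < y ∧ 3/2 < y^2 ∧ y^2 < (2+s3)/2 := by
    intro y h1 h2 h3
    have hy1 : 1 < y := lt_trans (by
      rw [show (1:ℝ) = Real.sqrt 1 from (Real.sqrt_one).symm]
      exact Real.sqrt_lt_sqrt (by norm_num) (by norm_num)) h1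
    have hy0 : 0 < y := by linarith
    have hy2 : 3/2 < y^2 := (Real.sqrt_lt' hy0).mp h1
    have hdy : 0 < 2*y^2 - 3 := by linarith
    rw [h27, ← h2, lt_div_iff₀ hdy] at h3
    have hcancel : (5 + 3*s3) * (2*y^2-3) < 4 * y^2 := by
      have h3' : ((5 + 3*s3) * (2*y^2-3)) * y^3 < (4 * y^2) * y^3 := by linarith [h3]
      exact lt_of_mul_lt_mul_right h3' (by positivity)
    exact ⟨hy1, hy2, sig_aux_bound s3 y hs3 hs3l hcancel⟩
  -- setup for existence
  set δ : ℝ := min (8/ω) (1/2) with hδdef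
  have hδpos : 0 < δ := lt_min (by positivity) (by norm_num)
  have hδle : δ ≤ 8/ω := min_le_left _ _
  have hδle2 : δ ≤ 1/2 := min_le_right _ _
  clear_value δ
  set z₀ : ℝ := Real.sqrt ((3+δ)/2) with hz₀def
  have hz₀sq : z₀^2 = (3+δ)/2 := Real.sq_sqrt (by positivity)
  have hz₀pos : 0 < z₀ := Real.sqrt_pos.mpr (by positivity)
  have hz₀1 : 1 < z₀ := by nlinarith [hz₀sq]
  set b : ℝ := (26+15*s3)/(19+11*s3) with hbdef
  have hbden : (0:ℝ) < 19+11*s3 := by linarith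
  have hbpos : 0 < b := by rw [hbdef]; positivity
  have hb2 : b^2 = (2+s3)/2 := by
    rw [hbdef, div_pow, div_eq_div_iff (by positivity) (by norm_num)]
    linear_combination (-121*s3-210)*hs3
  have hden : 2*b^2 - 3 = s3 - 1 := by rw [hb2]; ring
  have hdenpos' : (0:ℝ) < s3 - 1 := by linarith
  have hz₀b : z₀ < b := by
    rw [hz₀def, Real.sqrt_lt' hbpos, hb2]
    linarith
  have hsz₀ : Real.sqrt (3/2) < z₀ := by
    rw [hz₀def]
    exact Real.sqrt_lt_sqrt (by norm_num) (by linarith)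
  have hfb : 4 * b ^ 5 / (2 * b ^ 2 - 3) = (26+15*s3)/2 := by
    have hb5 : b^5 = ((2+s3)/2)^2 * b := by rw [← hb2]; ring
    rw [hden, hb5, hbdef, div_eq_div_iff (ne_of_gt hdenpos') (by norm_num : (2:ℝ) ≠ 0)]
    field_simp
    linear_combination (-18)*hs3
  clear_value z₀ b
  have hdenpos : ∀ x ∈ Set.Icc z₀ b, 0 < 2*x^2 - 3 := by
    intro x hx
    have h := pow_le_pow_left₀ (le_of_lt hz₀pos) hx.1 2
    rw [hz₀sq] at h; linarith
  have hcont : ContinuousOn (fun z : ℝ => 4 * z ^ 5 / (2 * z ^ 2 - 3)) (Set.Icc z₀ b) := by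
    apply ContinuousOn.div
    · fun_prop
    · fun_prop
    · intro x hx; exact ne_of_gt (hdenpos x hx)
  have hfz₀ : ω ≤ 4 * z₀ ^ 5 / (2 * z₀ ^ 2 - 3) := by
    have hdz₀ : 2*z₀^2 - 3 = δ := by rw [hz₀sq]; ring
    rw [hdz₀, le_div_iff₀ hδpos]
    have hz₀5 : 9/4 ≤ z₀^5 := sig_aux_pow5 z₀ hz₀1 (by rw [hz₀sq]; linarith)
    have h8 : ω * δ ≤ 8 := by
      have := mul_le_mul_of_nonneg_left hδle (le_of_lt hωpos)
      rwa [mul_div_cancel₀ _ (ne_of_gt hωpos)] at this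
    nlinarith
  -- IVT
  obtain ⟨z, hzmem, hfz⟩ := intermediate_value_Icc' (le_of_lt hz₀b) hcont
    ⟨by simpa [hfb] using le_of_lt hω, by simpa using hfz₀⟩
  have hfzeq : 4 * z ^ 5 / (2 * z ^ 2 - 3) = ω := hfz
  clear hcont hfz
  have hzb : z < b := by
    rcases lt_or_eq_of_le hzmem.2 with h | h
    · exact h
    · exfalso; rw [h, hfb] at hfzeq; linarith
  have hsz : Real.sqrt (3/2) < z := lt_of_lt_of_le hsz₀ hzmem.1
  have hz0 : 0 < z := lt_of_lt_of_le hz₀pos hzmem.1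
  have hz1 : 1 < z := lt_of_lt_of_le hz₀1 hzmem.1
  have hz2 : z^2 < (2+s3)/2 := by
    have h : z^2 < b^2 := pow_lt_pow_left₀ hzb (le_of_lt hz0) (by norm_num)
    rwa [hb2] at h
  have hz2' : 3/2 < z^2 := by
    have h := pow_le_pow_left₀ (le_of_lt hz₀pos) hzmem.1 2
    rw [hz₀sq] at h; linarith
  have hdz : 0 < 2*z^2 - 3 := by linarith
  have hcond : (5 + Real.sqrt 27) * z ^ 3 < ω := by
    rw [h27, ← hfzeq, lt_div_iff₀ hdz]
    have h := sig_aux_cond s3 z hs3 hs3l hz0 hz2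
    linarith [h]
  refine ⟨z, ⟨hsz, hfzeq, hcond⟩, ?_⟩
  -- uniqueness
  rintro y ⟨hy1, hy2, hy3⟩
  obtain ⟨hyg1, hyg2, hyg3⟩ := key y hy1 hy2 hy3
  have hy0 : 0 < y := by linarith
  have hy2lt : y^2 < 2 := by linarith
  have hz2lt : z^2 < 2 := by linarith
  have hdy : 0 < 2*y^2 - 3 := by linarith
  have heq : 4 * y^5 * (2*z^2 - 3) = 4 * z^5 * (2*y^2 - 3) := by
    have h := hy2.trans hfzeq.symm
    rw [div_eq_div_iff (ne_of_gt hdy) (ne_of_gt hdz)] at h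
    linarith [h]
  have hg := sig_aux_inj z y hz1 hyg1 hz2lt hy2lt
  have hfac : (y - z) * (2*z^2*y^2*(z^2+z*y+y^2) - 3*(z^4+z^3*y+z^2*y^2+z*y^3+y^4)) = 0 := by
    linear_combination (1/4) * heq
  rcases mul_eq_zero.mp hfac with h | h
  · linarith [sub_eq_zero.mp h]
  · exfalso; linarith [hg, h]
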